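/- Let ξ = (ξ^c, ξ^m) with i.i.d. copies (ξ^c_i, ξ^m_i), E(ξ^c + ξ^m) ≤ 1. Define S^+_n = Σ_{i≤n}(ξ^c_i + ξ^m_i) − n, S^c_n = Σ_{i≤n} ξ^c_i − n, T^+_i = inf{n : S^+_n = −i}, T^c_j = inf{n : S^c_n = −j}. Then almost surely the range {T^+_i : i ≥ 0} is contained in the range {T^c_j : j ≥ 0}. -/

import Mathlib

set_option autoImplicit false

open MeasureTheory ProbabilityTheory Filter Finset

/-- Discrete intermediate value theorem for walks that decrease by at most 1 per step. -/
lemma ivt_skip (f : ℕ → ℤ) (hf : ∀ k, f k - 1 ≤ f (k + 1)) (t : ℤ) :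
    ∀ m, f m ≤ t → t ≤ f 0 → ∃ m' ≤ m, f m' = t := by
  intro m
  induction m with
  | zero => intro h1 h2; exact ⟨0, le_refl 0, le_antisymm h1 h2⟩
  | succ m ih =>
    intro h1 h2
    rcases eq_or_lt_of_le h1 with he | hl
    · exact ⟨m + 1, le_refl _, he⟩
    · obtain ⟨m', hm', he⟩ := ih (by have := hf m; omega) h2
      exact ⟨m', Nat.le_succ_of_le hm', he⟩

/-- The range of the passage times of the total-offspring walk `S^+` is almost surely
contained in the range of the passage times of the clone-offspring walk `S^c`:
predecessors of ancestors are also predecessors of mutants. -/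
theorem range_Tplus_subset_range_Tc
    {Ω : Type*} [MeasureSpace Ω] (P : Measure Ω := volume) [IsProbabilityMeasure P]
    (ξ : ℕ → Ω → ℕ × ℕ) (hmeas : ∀ i, Measurable (ξ i))
    (hindep : iIndepFun ξ P)
    (hident : ∀ i, IdentDistrib (ξ i) (ξ 0) P P)
    (hint : Integrable (fun ω => (((ξ 0 ω).1 : ℝ) + ((ξ 0 ω).2 : ℝ))) P)
    (hmean : (∫ ω, (((ξ 0 ω).1 : ℝ) + ((ξ 0 ω).2 : ℝ)) ∂P) ≤ 1)
    (Tp Tc : ℕ → Ω → ℕ)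
    (hTp : ∀ i ω, Tp i ω = sInf {m : ℕ |
      (∑ j ∈ Finset.range m, (((ξ j ω).1 : ℤ) + ((ξ j ω).2 : ℤ))) - m = -(i : ℤ)})
    (hTc : ∀ i ω, Tc i ω = sInf {m : ℕ |
      (∑ j ∈ Finset.range m, ((ξ j ω).1 : ℤ)) - m = -(i : ℤ)}) :
    ∀ᵐ ω ∂P, ∀ i : ℕ, ∃ j : ℕ, Tc j ω = Tp i ω := by
  refine ae_of_all _ fun ω i => ?_
  set Sp : ℕ → ℤ := fun m =>
    (∑ j ∈ Finset.range m, (((ξ j ω).1 : ℤ) + ((ξ j ω).2 : ℤ))) - m with hSpdef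
  set Sc : ℕ → ℤ := fun m => (∑ j ∈ Finset.range m, ((ξ j ω).1 : ℤ)) - m with hScdef
  have hTp' : Tp i ω = sInf {m : ℕ | Sp m = -(i : ℤ)} := hTp i ω
  have hTc' : ∀ j, Tc j ω = sInf {m : ℕ | Sc m = -(j : ℤ)} := fun j => hTc j ω
  have hdiff : ∀ m, Sp m = Sc m + ∑ j ∈ Finset.range m, ((ξ j ω).2 : ℤ) := by
    intro m
    simp only [hSpdef, hScdef, Finset.sum_add_distrib]
    ring
  have hmonoD : ∀ m n : ℕ, m ≤ n →
      (∑ j ∈ Finset.range m, ((ξ j ω).2 : ℤ)) ≤ ∑ j ∈ Finset.range n, ((ξ j ω).2 : ℤ) := by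
    intro m n hmn
    exact Finset.sum_le_sum_of_subset_of_nonneg (Finset.range_subset_range.mpr hmn)
      (fun j _ _ => by positivity)
  have hcle : ∀ m, Sc m ≤ Sp m := by
    intro m
    rw [hdiff m]
    have : (0:ℤ) ≤ ∑ j ∈ Finset.range m, ((ξ j ω).2 : ℤ) := by positivity
    omega
  have hskip : ∀ k, Sp k - 1 ≤ Sp (k + 1) := by
    intro k
    simp only [hSpdef, Finset.sum_range_succ]
    have h1 : (0:ℤ) ≤ ((ξ k ω).1 : ℤ) + ((ξ k ω).2 : ℤ) := by positivity
    push_cast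
    omega
  have hSp0 : Sp 0 = 0 := by simp [hSpdef]
  by_cases hA : {m : ℕ | Sp m = -(i : ℤ)}.Nonempty
  · set n := sInf {m : ℕ | Sp m = -(i : ℤ)} with hn
    have hnmem : Sp n = -(i : ℤ) := Nat.sInf_mem hA
    have hmin : ∀ m, Sp m = -(i : ℤ) → n ≤ m := fun m hm => Nat.sInf_le hm
    -- no earlier time has the same clone-walk value as `n`
    have hkey : ∀ m, m < n → Sc m ≠ Sc n := by
      intro m hmn heq
      have h1 : Sp m ≤ -(i : ℤ) := by
        rw [hdiff m, heq]
        calc Sc n + ∑ j ∈ Finset.range m, ((ξ j ω).2 : ℤ)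
            ≤ Sc n + ∑ j ∈ Finset.range n, ((ξ j ω).2 : ℤ) := by
              have := hmonoD m n (le_of_lt hmn); omega
          _ = Sp n := (hdiff n).symm
          _ = -(i : ℤ) := hnmem
      have h2 : -(i : ℤ) ≤ Sp 0 := by rw [hSp0]; omega
      obtain ⟨m', hm', he⟩ := ivt_skip Sp hskip _ m h1 h2
      have := hmin m' he
      omega
    have hScn : Sc n ≤ 0 := by
      have := hcle n
      have : Sp n ≤ 0 := by rw [hnmem]; omega
      have := hcle n
      omega
    refine ⟨(-(Sc n)).toNat, ?_⟩
    have hj : ((-(Sc n)).toNat : ℤ) = -(Sc n) := Int.toNat_of_nonneg (by omega)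
    have hmemc : Sc n = -(((-(Sc n)).toNat : ℕ) : ℤ) := by rw [hj]; ring
    rw [hTc' _, hTp']
    apply le_antisymm
    · exact Nat.sInf_le hmemc
    · have hne : {m : ℕ | Sc m = -(((-(Sc n)).toNat : ℕ) : ℤ)}.Nonempty := ⟨n, hmemc⟩
      have hmem := Nat.sInf_mem hne
      by_contra hlt
      push_neg at hlt
      exact hkey _ hlt (by rw [Set.mem_setOf_eq] at hmem; rw [hmem, ← hmemc])
  · refine ⟨0, ?_⟩
    have h1 : Tp i ω = 0 := by
      rw [hTp']
      exact Nat.sInf_eq_zero.mpr (Or.inr (Set.not_nonempty_iff_eq_empty.mp hA))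
    have h2 : Tc 0 ω = 0 := by
      rw [hTc' 0]
      refine Nat.sInf_eq_zero.mpr (Or.inl ?_)
      simp [hScdef]
    rw [h1, h2]
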